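/- Let k ≥ 2 be an integer and let D be a k-quasi-transitive digraph. Then D has a (k+1)-king if and only if D has exactly one initial strong component. -/

import Mathlib

variable {V : Type*}

/-- A directed path of length `n` from `u` to `v` in the digraph with arc relation `A`:
a sequence of `n + 1` pairwise distinct vertices, consecutive ones joined by arcs. -/
def HasPathN (A : V → V → Prop) (u v : V) (n : ℕ) : Prop :=
  ∃ f : Fin (n + 1) → V, Function.Injective f ∧ f 0 = u ∧ f (Fin.last n) = v ∧
    ∀ i : Fin n, A (f i.castSucc) (f i.succ)

/-- The distance from `u` to `v`: the length of a shortest directed path from `u` to `v`,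
`⊤` if there is no such path. -/
noncomputable def ddist (A : V → V → Prop) (u v : V) : ℕ∞ :=
  sInf {n : ℕ∞ | ∃ m : ℕ, n = (m : ℕ∞) ∧ HasPathN A u v m}

/-- `D` is `k`-quasi-transitive if for every directed path `(v_0, …, v_k)` of length `k`,
either `(v_0, v_k)` or `(v_k, v_0)` is an arc. -/
def KQuasiTrans (A : V → V → Prop) (k : ℕ) : Prop :=
  ∀ u v : V, HasPathN A u v k → A u v ∨ A v u

/-- A vertex `v` is an `r`-king if every vertex is within distance `r` from `v`. -/
def IsRKing (A : V → V → Prop) (r : ℕ) (v : V) : Prop :=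
  ∀ u : V, ddist A v u ≤ (r : ℕ∞)

/-- `u` reaches `v` by a directed path. -/
def Reaches (A : V → V → Prop) (u v : V) : Prop :=
  ∃ n : ℕ, HasPathN A u v n

/-- A strong component: the set of all vertices mutually reachable with some vertex. -/
def IsStrongComponent (A : V → V → Prop) (S : Set V) : Prop :=
  ∃ v : V, S = {u | Reaches A u v ∧ Reaches A v u}

/-- An initial strong component: a strong component receiving no arcs from outside. -/
def IsInitialStrongComponent (A : V → V → Prop) (S : Set V) : Prop :=
  IsStrongComponent A S ∧ ∀ u v : V, u ∉ S → v ∈ S → ¬ A u v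

/-- The out-degree of `v` in `D`. -/
noncomputable def outDeg (A : V → V → Prop) (v : V) : ℕ :=
  {u : V | A v u}.ncard

/-- The out-degree of `v` in the subdigraph of `D` induced by `C`. -/
noncomputable def outDegIn (A : V → V → Prop) (C : Set V) (v : V) : ℕ :=
  {u ∈ C | A v u}.ncard

/-- The maximum out-degree of the subdigraph induced by `C`. -/
noncomputable def maxOutDegIn (A : V → V → Prop) (C : Set V) : ℕ :=
  sSup (outDegIn A C '' C)

section Lists
variable {A : V → V → Prop}

lemma hasPathN_iff_list {u v : V} {n : ℕ} :
    HasPathN A u v n ↔ ∃ l : List V, l.IsChain A ∧ l.Nodup ∧ l.length = n + 1 ∧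
      l.head? = some u ∧ l.getLast? = some v := by
  constructor
  · rintro ⟨f, hinj, h0, hl, harc⟩
    refine ⟨List.ofFn f, ?_, ?_, ?_, ?_, ?_⟩
    · rw [List.isChain_iff_getElem]
      intro i hi
      simp only [List.length_ofFn] at hi
      rw [List.getElem_ofFn, List.getElem_ofFn]
      have : i < n := by simpa using hi
      exact harc ⟨i, this⟩
    · exact List.nodup_ofFn.mpr hinj
    · simp
    · rw [List.head?_eq_getElem?, List.getElem?_eq_getElem (by simp)]
      simpa using congrArg some h0
    · rw [List.getLast?_eq_getElem?, List.getElem?_eq_getElem (by simp)]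
      refine congrArg some ?_
      rw [List.getElem_ofFn]
      rw [← hl]
      congr 1
      ext
      simp [Fin.last]
  · rintro ⟨l, hch, hnd, hlen, hhd, hlast⟩
    refine ⟨fun i => l.get (Fin.cast hlen.symm i), ?_, ?_, ?_, ?_⟩
    · intro a b hab
      have := List.nodup_iff_injective_get.mp hnd hab
      simpa using this
    · rw [List.head?_eq_getElem?, List.getElem?_eq_getElem (by omega)] at hhd
      simpa using hhd
    · rw [List.getLast?_eq_getElem?, List.getElem?_eq_getElem (by omega)] at hlast
      have := Option.some.inj hlast
      rw [← this]
      simp [hlen, Fin.last]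
    · intro i
      rw [List.isChain_iff_getElem] at hch
      have hi : (i : ℕ) + 1 < l.length := by
        have := i.isLt; omega
      exact hch i hi

lemma chain'_dedup_aux : ∀ (N : ℕ) (l : List V), l.length ≤ N → l.IsChain A → l ≠ [] →
    ∃ l' : List V, l'.Sublist l ∧ l'.Nodup ∧ l'.IsChain A ∧
      l'.head? = l.head? ∧ l'.getLast? = l.getLast? := by
  intro N
  induction N with
  | zero => intro l hl _ hne; cases l with
    | nil => exact absurd rfl hne
    | cons a t => simp at hl
  | succ N ih =>
    intro l hl hch hne
    cases l with
    | nil => exact absurd rfl hne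
    | cons a rest =>
      by_cases ha : a ∈ rest
      · obtain ⟨s, t, hst⟩ := List.append_of_mem ha
        have heq : a :: rest = (a :: s) ++ (a :: t) := by simp [hst]
        have hsuf : (a :: t) <:+ (a :: rest) := ⟨a :: s, heq.symm⟩
        have hch' : (a :: t).IsChain A := hch.suffix hsuf
        have hlen' : (a :: t).length ≤ N := by
          have := congrArg List.length hst
          simp only [List.length_cons, List.length_append] at this hl ⊢
          omega
        obtain ⟨l', hsub, hnd, hc, hh, hg⟩ := ih (a :: t) hlen' hch' (by simp)
        refine ⟨l', hsub.trans hsuf.sublist, hnd, hc, ?_, ?_⟩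
        · simpa using hh
        · rw [hg, heq, List.getLast?_append]
          cases htl : (a :: t).getLast? with
          | none => simp at htl
          | some y => simp
      · cases rest with
        | nil =>
          exact ⟨[a], by simp, by simp, by simp, rfl, rfl⟩
        | cons b t =>
          have hch2 : (b :: t).IsChain A := hch.tail
          obtain ⟨l', hsub, hnd, hc, hh, hg⟩ := ih (b :: t) (by simp at hl ⊢; omega) hch2 (by simp)
          have hl'ne : l' ≠ [] := by
            intro h; rw [h] at hh; simp at hh
          refine ⟨a :: l', hsub.cons₂ a, ?_, ?_, by simp, ?_⟩
          · refine List.nodup_cons.mpr ⟨fun hmem => ha (hsub.subset hmem), hnd⟩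
          · rw [List.isChain_cons]
            refine ⟨?_, hc⟩
            intro y hy
            rw [hh] at hy
            simp at hy
            rw [← hy]
            exact (List.isChain_cons.mp hch).1 b (by simp)
          · obtain ⟨y, hy⟩ := List.getLast?_isSome.mpr hl'ne |> Option.isSome_iff_exists.mp
            have h1 : (a :: l').getLast? = l'.getLast? := by
              have : a :: l' = [a] ++ l' := rfl
              rw [this, List.getLast?_append, hy]; rfl
            have h2 : (a :: b :: t).getLast? = (b :: t).getLast? := by
              have : a :: b :: t = [a] ++ (b :: t) := rfl
              rw [this, List.getLast?_append]
              obtain ⟨z, hz⟩ := List.getLast?_isSome.mpr (by simp : (b :: t) ≠ []) |> Option.isSome_iff_exists.mp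
              rw [hz]; rfl
            rw [h1, h2, hg]
      
end Lists

section Ddist
variable {A : V → V → Prop}

lemma ddist_le_of_path {u v : V} {m : ℕ} (h : HasPathN A u v m) : ddist A u v ≤ (m : ℕ∞) :=
  sInf_le ⟨m, rfl, h⟩

lemma ddist_le_iff {u v : V} {n : ℕ} :
    ddist A u v ≤ (n : ℕ∞) ↔ ∃ m ≤ n, HasPathN A u v m := by
  constructor
  · intro h
    by_contra hc
    push_neg at hc
    have hlb : ((n+1 : ℕ) : ℕ∞) ≤ ddist A u v := by
      apply le_sInf
      rintro b ⟨m, rfl, hp⟩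
      have : ¬ m ≤ n := fun hm => hc m hm hp
      exact_mod_cast by omega
    have := hlb.trans h
    exact absurd (by exact_mod_cast this) (by omega)
  · rintro ⟨m, hm, hp⟩
    exact (ddist_le_of_path hp).trans (by exact_mod_cast hm)

lemma path_of_ddist_eq {u v : V} {n : ℕ} (h : ddist A u v = (n : ℕ∞)) :
    HasPathN A u v n := by
  obtain ⟨m, hm, hp⟩ := ddist_le_iff.mp h.le
  have : (n : ℕ∞) ≤ (m : ℕ∞) := h ▸ ddist_le_of_path hp
  have : n ≤ m := by exact_mod_cast this
  have : m = n := by omega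
  exact this ▸ hp

lemma ddist_le_of_walk {u v : V} {l : List V} (hch : l.IsChain A)
    (hh : l.head? = some u) (hg : l.getLast? = some v) :
    ddist A u v ≤ ((l.length - 1 : ℕ) : ℕ∞) := by
  have hne : l ≠ [] := by rintro rfl; simp at hh
  obtain ⟨l', hsub, hnd, hc, hh', hg'⟩ := chain'_dedup_aux l.length l le_rfl hch hne
  have hne' : l' ≠ [] := by rintro rfl; rw [hh] at hh'; simp at hh'
  have hlen : l'.length = (l'.length - 1) + 1 := by
    have : 0 < l'.length := List.length_pos_iff.mpr hne'
    omega
  have hp : HasPathN A u v (l'.length - 1) :=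
    hasPathN_iff_list.mpr ⟨l', hc, hnd, hlen.symm ▸ rfl, hh'.trans hh, hg'.trans hg⟩
  refine (ddist_le_of_path hp).trans ?_
  have := hsub.length_le
  exact_mod_cast by omega

lemma ddist_self (u : V) : ddist A u u = 0 := by
  refine le_antisymm ?_ (zero_le)
  have : HasPathN A u u 0 := hasPathN_iff_list.mpr ⟨[u], by simp, by simp, rfl, rfl, rfl⟩
  simpa using ddist_le_of_path this

lemma ddist_le_one_of_arc (hloop : ∀ x : V, ¬ A x x) {u v : V} (h : A u v) :
    ddist A u v ≤ 1 := by
  have hne : u ≠ v := by rintro rfl; exact hloop u h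
  have : HasPathN A u v 1 := hasPathN_iff_list.mpr ⟨[u, v], by simp [h], by simp [hne], rfl, rfl, rfl⟩
  simpa using ddist_le_of_path this

lemma ddist_triangle' {u v w : V} {p q : ℕ} (h1 : ddist A u v ≤ (p : ℕ∞))
    (h2 : ddist A v w ≤ (q : ℕ∞)) : ddist A u w ≤ ((p + q : ℕ) : ℕ∞) := by
  obtain ⟨m1, hm1, hp1⟩ := ddist_le_iff.mp h1
  obtain ⟨m2, hm2, hp2⟩ := ddist_le_iff.mp h2
  obtain ⟨l, lc, lnd, llen, lh, lg⟩ := hasPathN_iff_list.mp hp1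
  obtain ⟨m, mc, mnd, mlen, mh, mg⟩ := hasPathN_iff_list.mp hp2
  have hlne : l ≠ [] := by rintro rfl; simp at lh
  have hwalk : (l ++ m.tail).IsChain A := by
    rw [List.isChain_append]
    refine ⟨lc, mc.tail, ?_⟩
    intro a ha b hb
    rw [lg] at ha
    cases m with
    | nil => simp at mh
    | cons c t =>
      cases t with
      | nil => simp at hb
      | cons d t' =>
        simp at ha hb mh
        subst ha hb mh
        exact (List.isChain_cons.mp mc).1 d (by simp)
  have hh : (l ++ m.tail).head? = some u := by
    cases l with
    | nil => simp at lh
    | cons a t => simpa using lh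
  have hg : (l ++ m.tail).getLast? = some w := by
    rw [List.getLast?_append]
    cases m with
    | nil => simp at mh
    | cons c t =>
      cases t with
      | nil =>
        simp at mg mh
        subst mg mh
        simpa using lg
      | cons d t' =>
        have h2' : (c :: d :: t').getLast? = (d :: t').getLast? := by
          have : c :: d :: t' = [c] ++ (d :: t') := rfl
          rw [this, List.getLast?_append]
          obtain ⟨z, hz⟩ := Option.isSome_iff_exists.mp (List.getLast?_isSome.mpr (by simp : (d :: t') ≠ []))
          rw [hz]; rfl
        have : (c :: d :: t').tail = d :: t' := rfl
        rw [this, ← h2', mg]; rfl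
  have := ddist_le_of_walk hwalk hh hg
  refine this.trans ?_
  have hlen : (l ++ m.tail).length - 1 ≤ p + q := by
    rw [List.length_append, List.length_tail]
    omega
  exact_mod_cast hlen

lemma ddist_ne_top_iff {u v : V} : ddist A u v ≠ ⊤ ↔ ∃ n : ℕ, ddist A u v = (n : ℕ∞) := by
  cases h : ddist A u v with
  | top => simp
  | coe n => exact ⟨fun _ => ⟨n, rfl⟩, fun _ => by simp⟩

lemma reaches_iff_ddist {u v : V} : Reaches A u v ↔ ddist A u v ≠ ⊤ := by
  constructor
  · rintro ⟨n, hp⟩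
    intro htop
    have := ddist_le_of_path hp
    rw [htop] at this
    exact absurd (top_le_iff.mp this) (by simp)
  · intro h
    obtain ⟨n, hn⟩ := ddist_ne_top_iff.mp h
    exact ⟨n, path_of_ddist_eq hn⟩

lemma reaches_refl (u : V) : Reaches A u u :=
  ⟨0, hasPathN_iff_list.mpr ⟨[u], by simp, by simp, rfl, rfl, rfl⟩⟩

lemma reaches_trans {u v w : V} (h1 : Reaches A u v) (h2 : Reaches A v w) :
    Reaches A u w := by
  obtain ⟨p, hp⟩ := h1
  obtain ⟨q, hq⟩ := h2
  have := ddist_triangle' (ddist_le_of_path hp) (ddist_le_of_path hq)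
  obtain ⟨m, _, hm⟩ := ddist_le_iff.mp this
  exact ⟨m, hm⟩

lemma reaches_of_ddist_le {u v : V} {n : ℕ} (h : ddist A u v ≤ (n : ℕ∞)) : Reaches A u v := by
  obtain ⟨m, _, hm⟩ := ddist_le_iff.mp h
  exact ⟨m, hm⟩

end Ddist

section Short
variable {A : V → V → Prop}

lemma exists_shortestFun {u v : V} {n : ℕ} (h : ddist A u v = (n : ℕ∞)) :
    ∃ x : ℕ → V, x 0 = u ∧ x n = v ∧ (∀ i < n, A (x i) (x (i+1))) ∧
      (∀ i ≤ n, ∀ j ≤ n, x i = x j → i = j) := by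
  obtain ⟨l, lc, lnd, llen, lh, lg⟩ := hasPathN_iff_list.mp (path_of_ddist_eq h)
  refine ⟨fun i => l.getD i u, ?_, ?_, ?_, ?_⟩
  · show l.getD 0 u = u
    rw [List.getD_eq_getElem l u (by omega)]
    rw [List.head?_eq_getElem?, List.getElem?_eq_getElem (by omega)] at lh
    simpa using lh
  · show l.getD n u = v
    rw [List.getD_eq_getElem l u (by omega)]
    rw [List.getLast?_eq_getElem?, List.getElem?_eq_getElem (by omega)] at lg
    simp only [show l.length - 1 = n from by omega] at lg
    simpa using lg
  · intro i hi
    show A (l.getD i u) (l.getD (i+1) u)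
    rw [List.getD_eq_getElem l u (by omega), List.getD_eq_getElem l u (by omega)]
    rw [List.isChain_iff_getElem] at lc
    have := lc i (by omega)
    simpa using this
  · intro i hi j hj hij
    simp only [] at hij
    rw [List.getD_eq_getElem l u (by omega), List.getD_eq_getElem l u (by omega)] at hij
    have := List.nodup_iff_injective_get.mp lnd
      (a₁ := ⟨i, by omega⟩) (a₂ := ⟨j, by omega⟩) (by simpa using hij)
    simpa using this

lemma ddist_segment (hloop : ∀ x : V, ¬ A x x) {x : ℕ → V} {n : ℕ}
    (harc : ∀ i < n, A (x i) (x (i+1))) :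
    ∀ d i, i + d ≤ n → ddist A (x i) (x (i + d)) ≤ (d : ℕ∞) := by
  intro d
  induction d with
  | zero => intro i _; simp [ddist_self]
  | succ d ih =>
    intro i hi
    have h1 : ddist A (x i) (x (i+1)) ≤ (1 : ℕ) := ddist_le_one_of_arc hloop (harc i (by omega))
    have h2 : ddist A (x (i+1)) (x (i+1+d)) ≤ (d : ℕ∞) := ih (i+1) (by omega)
    have := ddist_triangle' (by exact_mod_cast h1) h2
    have heq : i + 1 + d = i + (d + 1) := by omega
    rw [heq] at this
    exact this.trans (by exact_mod_cast by omega)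

lemma ddist_sub (hloop : ∀ x : V, ¬ A x x) {x : ℕ → V} {n : ℕ}
    (harc : ∀ i < n, A (x i) (x (i+1)))
    (hsh : ddist A (x 0) (x n) = (n : ℕ∞)) {i j : ℕ} (hij : i ≤ j) (hj : j ≤ n) :
    ddist A (x i) (x j) = ((j - i : ℕ) : ℕ∞) := by
  have hle : ddist A (x i) (x j) ≤ ((j - i : ℕ) : ℕ∞) := by
    have := ddist_segment hloop harc (j - i) i (by omega)
    have heq : i + (j - i) = j := by omega
    rwa [heq] at this
  obtain ⟨m, hm, hmeq⟩ : ∃ m, m ≤ j - i ∧ ddist A (x i) (x j) = (m : ℕ∞) := by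
    cases hd : ddist A (x i) (x j) with
    | top => rw [hd] at hle; exact absurd (top_le_iff.mp hle) (by simp)
    | coe m => exact ⟨m, by exact_mod_cast hd ▸ hle, rfl⟩
  have h0i : ddist A (x 0) (x i) ≤ (i : ℕ∞) := by
    simpa using ddist_segment hloop harc i 0 (by omega)
  have hjn : ddist A (x j) (x n) ≤ ((n - j : ℕ) : ℕ∞) := by
    have := ddist_segment hloop harc (n - j) j (by omega)
    have heq : j + (n - j) = n := by omega
    rwa [heq] at this
  have htot : ddist A (x 0) (x n) ≤ ((i + (m + (n - j)) : ℕ) : ℕ∞) :=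
    ddist_triangle' h0i (ddist_triangle' hmeq.le hjn)
  rw [hsh] at htot
  have : n ≤ i + (m + (n - j)) := by exact_mod_cast htot
  have : m = j - i := by omega
  rw [hmeq, this]

lemma chain'_range'_nat {R : ℕ → ℕ → Prop} :
    ∀ (m a : ℕ), (∀ i, a ≤ i → i + 1 < a + m → R i (i+1)) → (List.range' a m).IsChain R := by
  intro m
  induction m with
  | zero => intro a _; simp
  | succ m ih =>
    intro a h
    rw [List.range'_succ]
    rw [List.isChain_cons]
    constructor
    · intro y hy
      cases m with
      | zero => simp at hy
      | succ m' =>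
        rw [List.range'_succ] at hy
        simp at hy
        rw [← hy]
        exact h a le_rfl (by omega)
    · exact ih (a+1) (fun i hi hlt => h i (by omega) (by omega))

lemma range'_getLast? {a m : ℕ} (h : 0 < m) :
    (List.range' a m).getLast? = some (a + m - 1) := by
  induction m generalizing a with
  | zero => omega
  | succ m ih =>
    rw [List.range'_succ]
    cases m with
    | zero => simp
    | succ m' =>
      have h1 : (a :: List.range' (a+1) (m'+1)).getLast? = (List.range' (a+1) (m'+1)).getLast? := by
        have : a :: List.range' (a+1) (m'+1) = [a] ++ List.range' (a+1) (m'+1) := rfl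
        rw [this, List.getLast?_append, ih (by omega)]
        rfl
      rw [h1, ih (by omega)]
      congr 1
      omega

end Short

section Key
variable {A : V → V → Prop}

lemma getLast?_cons_ne_nil {α : Type*} {a : α} {l : List α} (h : l ≠ []) :
    (a :: l).getLast? = l.getLast? := by
  have heq : a :: l = [a] ++ l := rfl
  rw [heq, List.getLast?_append]
  obtain ⟨z, hz⟩ := Option.isSome_iff_exists.mp (List.getLast?_isSome.mpr h)
  rw [hz]; rfl

lemma range'_head? {a m : ℕ} (h : 0 < m) : (List.range' a m).head? = some a := by
  cases m with
  | zero => omega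
  | succ m => rw [List.range'_succ]; rfl

lemma range'_ne_nil {a m : ℕ} (h : 0 < m) : List.range' a m ≠ [] := by
  cases m with
  | zero => omega
  | succ m => rw [List.range'_succ]; simp

lemma qt_apply {k : ℕ} (hqt : KQuasiTrans A k) {x : ℕ → V} {n : ℕ}
    (hinj : ∀ i ≤ n, ∀ j ≤ n, x i = x j → i = j)
    (σ : List ℕ) (hlen : σ.length = k + 1) (hnd : σ.Nodup) (hbd : ∀ i ∈ σ, i ≤ n)
    (hch : σ.IsChain (fun i j => A (x i) (x j)))
    {a b : ℕ} (hhd : σ.head? = some a) (hlast : σ.getLast? = some b) :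
    A (x a) (x b) ∨ A (x b) (x a) := by
  apply hqt
  apply hasPathN_iff_list.mpr
  refine ⟨σ.map x, (List.isChain_map x).mpr hch, ?_, by simp [hlen], ?_, ?_⟩
  · exact List.Nodup.map_on (fun p hp q hq h => hinj p (hbd p hp) q (hbd q hq) h) hnd
  · rw [List.head?_map, hhd]; rfl
  · rw [List.getLast?_map, hlast]; rfl


lemma shortcut_bound (hloop : ∀ v : V, ¬ A v v) {x : ℕ → V} {n : ℕ}
    (harc : ∀ i < n, A (x i) (x (i+1)))
    (hsh : ddist A (x 0) (x n) = (n : ℕ∞)) :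
    ∀ s t, s ≤ n → t ≤ n → A (x s) (x t) → n ≤ s + 1 + (n - t) := by
  intro s t hs ht ha
  have h1 : ddist A (x 0) (x s) ≤ (s : ℕ∞) := by
    simpa using ddist_segment hloop harc s 0 (by omega)
  have h2 : ddist A (x s) (x t) ≤ ((1 : ℕ) : ℕ∞) := by
    exact_mod_cast ddist_le_one_of_arc hloop ha
  have h3 : ddist A (x t) (x n) ≤ ((n - t : ℕ) : ℕ∞) := by
    have := ddist_segment hloop harc (n - t) t (by omega)
    simpa [show t + (n - t) = n from by omega] using this
  have h4 := ddist_triangle' h1 (ddist_triangle' h2 h3)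
  rw [hsh] at h4
  have : n ≤ s + (1 + (n - t)) := by exact_mod_cast h4
  omega

lemma back_arc (hloop : ∀ v : V, ¬ A v v) {k : ℕ} (hk : 2 ≤ k) (hqt : KQuasiTrans A k)
    {x : ℕ → V} {n : ℕ}
    (harc : ∀ i < n, A (x i) (x (i+1)))
    (hinj : ∀ i ≤ n, ∀ j ≤ n, x i = x j → i = j)
    (hsh : ddist A (x 0) (x n) = (n : ℕ∞)) :
    ∀ i, i + k ≤ n → A (x (i+k)) (x i) := by
  intro i hik
  have hch : (List.range' i (k+1)).IsChain (fun a b => A (x a) (x b)) := by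
    apply chain'_range'_nat
    intro t h1 h2
    exact harc t (by omega)
  have hres := qt_apply (a := i) (b := i + k) hqt hinj (List.range' i (k+1)) (by simp)
    (List.nodup_range')
    (fun t ht => by rw [List.mem_range'_1] at ht; omega) hch
    (range'_head? (by omega)) (by rw [range'_getLast? (by omega)]; exact congrArg some (by omega))
  rcases hres with h | h
  · exfalso
    have := shortcut_bound hloop harc hsh i (i+k) (by omega) (by omega) h
    omega
  · exact h

lemma key_lemma (hloop : ∀ v : V, ¬ A v v) {k : ℕ} (hk : 2 ≤ k) (hqt : KQuasiTrans A k) :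
    ∀ n, k + 2 ≤ n → ∀ x : ℕ → V,
    (∀ i < n, A (x i) (x (i+1))) →
    (∀ i ≤ n, ∀ j ≤ n, x i = x j → i = j) →
    ddist A (x 0) (x n) = (n : ℕ∞) →
    A (x n) (x 0) ∨ A (x n) (x k) := by
  intro n
  induction n using Nat.strong_induction_on with
  | _ n IH =>
  intro hn x harc hinj hsh
  have harcbound : ∀ s t, s ≤ n → t ≤ n → A (x s) (x t) → n ≤ s + 1 + (n - t) :=
    shortcut_bound hloop harc hsh
  have hback : ∀ i, i + k ≤ n → A (x (i+k)) (x i) :=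
    back_arc hloop hk hqt harc hinj hsh
  -- descent
  have descent : ∀ j, 1 ≤ j → j ≤ k → A (x n) (x j) → A (x n) (x 0) ∨ A (x n) (x k) := by
    intro j
    induction j using Nat.strong_induction_on with
    | _ j IHj =>
    intro hj1 hjk hxj
    by_cases hjtop : j = k
    · right; exact hjtop ▸ hxj
    by_cases hj1' : j = 1
    · -- σ = n :: range' 1 k, endpoints n and k
      subst hj1'
      have hch : (↑n :: List.range' 1 k).IsChain (fun a b => A (x a) (x b)) := by
        rw [List.isChain_cons]
        refine ⟨?_, chain'_range'_nat _ _ (fun t h1 h2 => harc t (by omega))⟩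
        intro y hy
        rw [range'_head? (by omega)] at hy
        simp at hy; rw [← hy]; exact hxj
      have hres := qt_apply (b := k) hqt hinj (n :: List.range' 1 k) (by simp) ?_ ?_ hch rfl ?_
      rotate_left
      · rw [List.nodup_cons]
        refine ⟨fun hmem => ?_, List.nodup_range'⟩
        rw [List.mem_range'_1] at hmem; omega
      · intro t ht
        simp only [List.mem_cons, List.mem_range'_1] at ht
        rcases ht with rfl | ht <;> omega
      · rw [getLast?_cons_ne_nil (range'_ne_nil (by omega)), range'_getLast? (by omega)]
        congr 1; omega
      rcases hres with h | h
      · right; exact h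
      · exfalso; have := harcbound k n (by omega) (by omega) h; omega
    · -- 2 ≤ j ≤ k - 1 : σ = n :: (range' j (k-j+1) ++ range' 0 (j-1)), ends at j-2
      have hj2 : 2 ≤ j := by omega
      have hjk1 : j ≤ k - 1 := by omega
      set σ : List ℕ := (n : ℕ) :: (List.range' j (k-j+1) ++ List.range' 0 (j-1)) with hσ
      have hch : σ.IsChain (fun a b => A (x a) (x b)) := by
        rw [hσ, List.isChain_cons]
        constructor
        · intro y hy
          rw [List.head?_append, range'_head? (by omega)] at hy
          simp at hy; rw [← hy]; exact hxj
        · rw [List.isChain_append]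
          refine ⟨chain'_range'_nat _ _ (fun t h1 h2 => harc t (by omega)),
            chain'_range'_nat _ _ (fun t h1 h2 => harc t (by omega)), ?_⟩
          intro p hp q hq
          rw [range'_getLast? (by omega)] at hp
          rw [range'_head? (by omega)] at hq
          simp at hp hq
          have hpk : p = k := by omega
          subst hpk; rw [← hq]
          have := hback 0 (by omega)
          simpa using this
      have hres := qt_apply (b := j - 2) hqt hinj σ ?_ ?_ ?_ hch rfl ?_
      rotate_left
      · rw [hσ]; simp; omega
      · rw [hσ, List.nodup_cons, List.nodup_append]
        refine ⟨?_, List.nodup_range', List.nodup_range', ?_⟩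
        · intro hmem
          simp only [List.mem_append, List.mem_range'_1] at hmem
          omega
        · intro p hp q hq hpq
          rw [List.mem_range'_1] at hp hq
          omega
      · intro t ht
        rw [hσ] at ht
        simp only [List.mem_cons, List.mem_append, List.mem_range'_1] at ht
        rcases ht with rfl | ht | ht <;> omega
      · rw [hσ, getLast?_cons_ne_nil, List.getLast?_append, range'_getLast? (by omega)]
        · simp; omega
        · intro hemp
          exact (range'_ne_nil (show 0 < k - j + 1 from by omega)) (List.append_eq_nil_iff.mp hemp).1
      rcases hres with h | h
      · by_cases hj2' : j = 2
        · left; simpa [hj2'] using h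
        · exact IHj (j-2) (by omega) (by omega) (by omega) h
      · exfalso; have := harcbound (j-2) n (by omega) (by omega) h; omega
  -- main case split
  by_cases hbase : n = k + 2
  · have h2 : A (x n) (x 2) := by
      have := hback 2 (by omega)
      simpa [show 2 + k = n from by omega] using this
    exact descent 2 (by omega) (by omega) h2
  · -- n ≥ k + 3
    have hn3 : k + 3 ≤ n := by omega
    have hsub : ddist A (x 1) (x n) = ((n - 1 : ℕ) : ℕ∞) := by
      have := ddist_sub hloop harc hsh (i := 1) (j := n) (by omega) (by omega)
      simpa using this
    have hIH := IH (n-1) (by omega) (by omega) (fun i => x (i+1))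
      (fun i hi => by have := harc (i+1) (by omega); simpa [Nat.add_right_comm] using this)
      (fun i hi j hj hesq => by
        have := hinj (i+1) (by omega) (j+1) (by omega) hesq
        omega)
      (by simpa [show n - 1 + 1 = n from by omega] using hsub)
    rcases hIH with h | h
    · -- A (x n) (x 1)
      have hxn : A (x n) (x 1) := by simpa [show n - 1 + 1 = n from by omega] using h
      exact descent 1 (by omega) (by omega) hxn
    · -- A (x n) (x (k+1))
      have hxn : A (x n) (x (k+1)) := by simpa [show n - 1 + 1 = n from by omega] using h
      -- σ = [n, k+1] ++ range' 1 (k-1), ends at k-1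
      set σ : List ℕ := (n : ℕ) :: (k+1) :: List.range' 1 (k-1) with hσ
      have hch : σ.IsChain (fun a b => A (x a) (x b)) := by
        rw [hσ, List.isChain_cons, List.isChain_cons]
        refine ⟨?_, ?_, chain'_range'_nat _ _ (fun t h1 h2 => harc t (by omega))⟩
        · intro y hy; simp at hy; rw [← hy]; exact hxn
        · intro y hy
          rw [range'_head? (by omega)] at hy
          simp at hy; rw [← hy]
          have := hback 1 (by omega)
          simpa [Nat.add_comm] using this
      have hres := qt_apply (b := k - 1) hqt hinj σ ?_ ?_ ?_ hch rfl ?_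
      rotate_left
      · rw [hσ]; simp; omega
      · rw [hσ, List.nodup_cons, List.nodup_cons]
        refine ⟨?_, ?_, List.nodup_range'⟩
        · intro hmem
          simp only [List.mem_cons, List.mem_range'_1] at hmem
          omega
        · intro hmem
          rw [List.mem_range'_1] at hmem
          omega
      · intro t ht
        rw [hσ] at ht
        simp only [List.mem_cons, List.mem_range'_1] at ht
        rcases ht with rfl | rfl | ht <;> omega
      · rw [hσ, getLast?_cons_ne_nil (by simp), getLast?_cons_ne_nil (range'_ne_nil (by omega)),
          range'_getLast? (by omega)]
        congr 1; omega
      rcases hres with h' | h'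
      · exact descent (k-1) (by omega) (by omega) h'
      · exfalso; have := harcbound (k-1) n (by omega) (by omega) h'; omega

end Key

section Main
variable {A : V → V → Prop}

lemma ddist_back_le_two (hloop : ∀ v : V, ¬ A v v) {k : ℕ} (hk : 2 ≤ k)
    (hqt : KQuasiTrans A k) {u v : V} {n : ℕ} (hn : k + 2 ≤ n)
    (h : ddist A u v = (n : ℕ∞)) : ddist A v u ≤ ((2 : ℕ) : ℕ∞) := by
  obtain ⟨x, h0, hnn, harc, hinj⟩ := exists_shortestFun h
  have hsh : ddist A (x 0) (x n) = (n : ℕ∞) := by rw [h0, hnn]; exact h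
  rcases key_lemma hloop hk hqt n hn x harc hinj hsh with h1 | h1
  · have h2 : ddist A v u ≤ ((1 : ℕ) : ℕ∞) := by
      rw [← h0, ← hnn]
      exact_mod_cast ddist_le_one_of_arc hloop h1
    exact h2.trans (by exact_mod_cast one_le_two)
  · have hb : A (x k) (x 0) := by
      have := back_arc hloop hk hqt harc hinj hsh 0 (by omega)
      simpa using this
    have h2 : ddist A (x n) (x k) ≤ ((1:ℕ) : ℕ∞) := by
      exact_mod_cast ddist_le_one_of_arc hloop h1
    have h3 : ddist A (x k) (x 0) ≤ ((1:ℕ) : ℕ∞) := by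
      exact_mod_cast ddist_le_one_of_arc hloop hb
    have := ddist_triangle' h2 h3
    rw [h0, hnn] at this
    exact this

lemma reaches_of_arc (hloop : ∀ v : V, ¬ A v v) {u v : V} (h : A u v) : Reaches A u v :=
  reaches_of_ddist_le (n := 1) (by exact_mod_cast ddist_le_one_of_arc hloop h)

lemma head_mem_initial {S : Set V} (hC : IsInitialStrongComponent A S) :
    ∀ l : List V, l.IsChain A → ∀ g, l.getLast? = some g → g ∈ S →
      ∀ z, l.head? = some z → z ∈ S := by
  intro l
  induction l with
  | nil => intro _ g hg; simp at hg
  | cons a t ih =>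
    intro hch g hg hgS z hz
    have hz' : a = z := by simpa using hz
    subst hz'
    cases t with
    | nil =>
      have : a = g := by simpa using hg
      rwa [this]
    | cons b t' =>
      have hg' : (b :: t').getLast? = some g := by
        rwa [getLast?_cons_ne_nil (by simp)] at hg
      have hb : b ∈ S := ih hch.tail g hg' hgS b rfl
      by_contra ha
      exact hC.2 a b ha hb ((List.isChain_cons_cons.mp hch).1)

/-- Forward direction. -/
lemma king_forward (hloop : ∀ v : V, ¬ A v v) {k : ℕ} {v : V}
    (hking : IsRKing A (k+1) v) : ∃! C : Set V, IsInitialStrongComponent A C := by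
  have reach_all : ∀ u : V, Reaches A v u := fun u => reaches_of_ddist_le (hking u)
  set C : Set V := {u | Reaches A u v ∧ Reaches A v u} with hCdef
  have hCstrong : IsStrongComponent A C := ⟨v, rfl⟩
  have hCinit : IsInitialStrongComponent A C := by
    refine ⟨hCstrong, ?_⟩
    intro p q hp hq harc
    exact hp ⟨reaches_trans (reaches_of_arc hloop harc) hq.1, reach_all p⟩
  refine ⟨C, hCinit, ?_⟩
  rintro C' ⟨⟨g, rfl⟩, hinit⟩
  have hvC' : v ∈ {u | Reaches A u g ∧ Reaches A v u} → True := fun _ => trivial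
  -- v belongs to C'
  have hv : v ∈ {u | Reaches A u g ∧ Reaches A g u} := by
    obtain ⟨m, hm⟩ := reach_all g
    obtain ⟨l, lc, lnd, llen, lh, lg⟩ := hasPathN_iff_list.mp hm
    have hgmem : g ∈ {u | Reaches A u g ∧ Reaches A g u} := ⟨reaches_refl g, reaches_refl g⟩
    exact head_mem_initial ⟨⟨g, rfl⟩, hinit⟩ l lc g lg hgmem v lh
  ext u
  constructor
  · rintro ⟨hug, hgu⟩
    exact ⟨reaches_trans hug hv.2, reach_all u⟩
  · rintro ⟨huv, hvu⟩
    exact ⟨reaches_trans huv hv.1, reaches_trans hv.2 (reach_all u)⟩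

end Main

section Backward
variable {A : V → V → Prop}

lemma eq_of_ddist_eq_zero {u v : V} (h : ddist A u v = 0) : u = v := by
  have hp : HasPathN A u v 0 := path_of_ddist_eq (by exact_mod_cast h)
  obtain ⟨f, _, h0, hl, _⟩ := hp
  have : (0 : Fin 1) = Fin.last 0 := rfl
  rw [← h0, ← hl, this]

lemma king_backward [Fintype V] (hloop : ∀ v : V, ¬ A v v) {k : ℕ} (hk : 2 ≤ k)
    (hqt : KQuasiTrans A k)
    (huniq : ∃! C : Set V, IsInitialStrongComponent A C) : ∃ v : V, IsRKing A (k+1) v := by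
  classical
  obtain ⟨C, hC, hU⟩ := huniq
  obtain ⟨g, hCg⟩ := hC.1
  have hgC : g ∈ C := by rw [hCg]; exact ⟨reaches_refl g, reaches_refl g⟩
  have reach : ∀ u : V, ∀ w ∈ C, Reaches A w u := by
    intro u w hw
    have hS : ({z : V | Reaches A z u}).Nonempty := ⟨u, reaches_refl u⟩
    obtain ⟨w₀, hw₀S, hmin⟩ := Set.exists_min_image {z : V | Reaches A z u}
      (fun z => ({p : V | Reaches A p z}).ncard) (Set.toFinite _) hS
    have hinit : IsInitialStrongComponent A {z | Reaches A z w₀ ∧ Reaches A w₀ z} := by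
      refine ⟨⟨w₀, rfl⟩, ?_⟩
      intro p q hp hq harc
      have hpw : Reaches A p w₀ := reaches_trans (reaches_of_arc hloop harc) hq.1
      have hsubset : {z : V | Reaches A z p} ⊆ {z : V | Reaches A z w₀} :=
        fun z hz => reaches_trans hz hpw
      have hssub : {z : V | Reaches A z p} ⊂ {z : V | Reaches A z w₀} := by
        refine (Set.ssubset_iff_of_subset hsubset).mpr ⟨w₀, reaches_refl w₀, ?_⟩
        intro hcon
        exact hp ⟨hpw, hcon⟩
      have hlt := Set.ncard_lt_ncard hssub (Set.toFinite _)
      have hpS : p ∈ {z : V | Reaches A z u} := reaches_trans hpw hw₀S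
      have := hmin p hpS
      omega
    have hCeq : {z | Reaches A z w₀ ∧ Reaches A w₀ z} = C := hU _ hinit
    rw [← hCeq] at hw
    exact reaches_trans hw.1 hw₀S
  set N : V → Set V := fun z => {w | ddist A z w ≤ ((k+1 : ℕ) : ℕ∞)} with hN
  obtain ⟨v, hvC, hmax⟩ := Set.exists_max_image C (fun z => (N z).ncard) (Set.toFinite _) ⟨g, hgC⟩
  refine ⟨v, ?_⟩
  intro u
  by_contra hgt
  have hgt' : ¬ ddist A v u ≤ ((k+1 : ℕ) : ℕ∞) := by exact_mod_cast hgt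
  have hreach : Reaches A v u := reach u v hvC
  obtain ⟨n, hn⟩ := ddist_ne_top_iff.mp (reaches_iff_ddist.mp hreach)
  have hnk : k + 2 ≤ n := by
    by_contra hle
    exact hgt' (by rw [hn]; exact_mod_cast (by omega : n ≤ k+1))
  have hback2 : ddist A u v ≤ ((2:ℕ):ℕ∞) := ddist_back_le_two hloop hk hqt hnk hn
  have hvu_ne : u ≠ v := by
    intro h
    rw [h] at hn
    rw [ddist_self] at hn
    exact absurd hn.symm (by exact_mod_cast by omega)
  have huC : u ∈ C := by
    rw [hCg]
    have hvC' : Reaches A v g ∧ Reaches A g v := by rw [hCg] at hvC; exact hvC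
    exact ⟨reaches_trans (reaches_of_ddist_le hback2) hvC'.1,
      reaches_trans hvC'.2 (reaches_of_ddist_le hn.le)⟩
  -- N v ⊆ N u
  have hNsub : N v ⊆ N u := by
    intro w hw
    have hw' : ddist A v w ≤ ((k+1 : ℕ) : ℕ∞) := hw
    have hwne : ddist A v w ≠ ⊤ := fun h => by
      rw [h, top_le_iff] at hw'
      exact (ENat.coe_ne_top _) hw'
    obtain ⟨m, hm⟩ := ddist_ne_top_iff.mp hwne
    have hmk : m ≤ k + 1 := by rw [hm] at hw'; exact_mod_cast hw'
    have hd₀ne : ddist A u v ≠ ⊤ := fun h => by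
      rw [h, top_le_iff] at hback2
      exact (ENat.coe_ne_top _) hback2
    obtain ⟨d₀, hd₀⟩ := ddist_ne_top_iff.mp hd₀ne
    have hd₀2 : d₀ ≤ 2 := by rw [hd₀] at hback2; exact_mod_cast hback2
    have hd₀1 : 1 ≤ d₀ := by
      rcases Nat.eq_zero_or_pos d₀ with h0 | h1
      · exfalso
        exact hvu_ne (eq_of_ddist_eq_zero (by rw [hd₀, h0]; rfl))
      · exact h1
    show ddist A u w ≤ ((k+1 : ℕ) : ℕ∞)
    by_cases hsmall : m + d₀ ≤ k
    · have := ddist_triangle' hd₀.le hm.le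
      exact this.trans (by exact_mod_cast by omega)
    · have hmlb : k - d₀ + 1 ≤ m := by omega
      obtain ⟨z, hz0, hzd, hzarc, hzinj⟩ := exists_shortestFun hd₀
      obtain ⟨y, hy0, hym, hyarc, hyinj⟩ := exists_shortestFun hm
      -- distance from v to y i is at most i
      have hvyi : ∀ i, i ≤ m → ddist A v (y i) ≤ (i : ℕ∞) := by
        intro i hi
        have := ddist_segment hloop hyarc i 0 (by omega)
        simpa [hy0] using this
      have hyiw : ∀ i, i ≤ m → ddist A (y i) w ≤ ((m - i : ℕ) : ℕ∞) := by
        intro i hi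
        have := ddist_segment hloop hyarc (m - i) i (by omega)
        simpa [show i + (m-i) = m from by omega, hym] using this
      have hnotyu : ∀ i, i ≤ m → i ≤ k → y i ≠ u := by
        intro i him hik hcon
        have h1 : ddist A v u ≤ (i : ℕ∞) := hcon ▸ hvyi i him
        rw [hn] at h1
        have : n ≤ i := by exact_mod_cast h1
        omega
      interval_cases d₀
      · -- d₀ = 1 : path u :: y 0 .. y (k-1)
        have hAuv : A u v := by
          have := hzarc 0 (by omega)
          rwa [hz0, show z 1 = v from hzd] at this
        have hpath : HasPathN A u (y (k-1)) k := by
          apply hasPathN_iff_list.mpr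
          refine ⟨u :: (List.range' 0 k).map y, ?_, ?_, ?_, rfl, ?_⟩
          · rw [List.isChain_cons]
            constructor
            · intro b hb
              rw [List.head?_map, range'_head? (by omega)] at hb
              simp at hb
              rw [← hb, hy0]
              exact hAuv
            · rw [List.isChain_map]
              exact chain'_range'_nat _ _ (fun t h1 h2 => hyarc t (by omega))
          · rw [List.nodup_cons]
            constructor
            · intro hmem
              obtain ⟨i, hi, hiu⟩ := List.mem_map.mp hmem
              rw [List.mem_range'_1] at hi
              exact hnotyu i (by omega) (by omega) hiu
            · exact List.Nodup.map_on
                (fun p hp q hq h => by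
                  rw [List.mem_range'_1] at hp hq
                  exact hyinj p (by omega) q (by omega) h)
                (List.nodup_range')
          · simp
          · rw [getLast?_cons_ne_nil (by simp [range'_ne_nil (by omega : 0 < k)]),
              List.getLast?_map, range'_getLast? (by omega)]
            exact congrArg some (congrArg y (by omega))
        rcases hqt _ _ hpath with hA | hA
        · have h1 : ddist A u (y (k-1)) ≤ ((1:ℕ):ℕ∞) :=
            by exact_mod_cast ddist_le_one_of_arc hloop hA
          have h2 := hyiw (k-1) (by omega)
          have := ddist_triangle' h1 h2
          exact this.trans (by exact_mod_cast by omega)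
        · exfalso
          have h1 : ddist A (y (k-1)) u ≤ ((1:ℕ):ℕ∞) :=
            by exact_mod_cast ddist_le_one_of_arc hloop hA
          have := ddist_triangle' (hvyi (k-1) (by omega)) h1
          rw [hn] at this
          have : n ≤ (k-1) + 1 := by exact_mod_cast this
          omega
      · -- d₀ = 2 : u → z 1 → v = y 0 → ... → y (k-2)
        have hAuz : A u (z 1) := by
          have := hzarc 0 (by omega)
          rwa [hz0] at this
        have hAzv : A (z 1) v := by
          have := hzarc 1 (by omega)
          rwa [show z 2 = v from hzd] at this
        by_cases hcase : ∃ i, 1 ≤ i ∧ i ≤ m ∧ z 1 = y i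
        · obtain ⟨i, hi1, him, hieq⟩ := hcase
          have h1 : ddist A u (y i) ≤ ((1:ℕ):ℕ∞) := by
            rw [← hieq]
            exact_mod_cast ddist_le_one_of_arc hloop hAuz
          have := ddist_triangle' h1 (hyiw i him)
          exact this.trans (by exact_mod_cast by omega)
        · push_neg at hcase
          have hpath : HasPathN A u (y (k-2)) k := by
            apply hasPathN_iff_list.mpr
            refine ⟨u :: z 1 :: (List.range' 0 (k-1)).map y, ?_, ?_, ?_, rfl, ?_⟩
            · rw [List.isChain_cons, List.isChain_cons]
              refine ⟨?_, ?_, ?_⟩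
              · intro b hb; simp at hb; rw [← hb]; exact hAuz
              · intro b hb
                rw [List.head?_map, range'_head? (by omega)] at hb
                simp at hb
                rw [← hb, hy0]
                exact hAzv
              · rw [List.isChain_map]
                exact chain'_range'_nat _ _ (fun t h1 h2 => hyarc t (by omega))
            · rw [List.nodup_cons, List.nodup_cons]
              refine ⟨?_, ?_, ?_⟩
              · intro hmem
                rcases List.mem_cons.mp hmem with heq | hmem'
                · exact absurd (hzinj 0 (by omega) 1 (by omega) (hz0.symm ▸ heq)) (by omega)
                · obtain ⟨i, hi, hiu⟩ := List.mem_map.mp hmem'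
                  rw [List.mem_range'_1] at hi
                  exact hnotyu i (by omega) (by omega) hiu
              · intro hmem
                obtain ⟨i, hi, hiz⟩ := List.mem_map.mp hmem
                rw [List.mem_range'_1] at hi
                rcases Nat.eq_zero_or_pos i with h0 | h1
                · subst h0
                  rw [hy0] at hiz
                  have : z 1 = z 2 := by rw [show z 2 = v from hzd, hiz]
                  exact absurd (hzinj 1 (by omega) 2 (by omega) this) (by omega)
                · exact hcase i h1 (by omega) hiz.symm
              · exact List.Nodup.map_on
                  (fun p hp q hq h => by
                    rw [List.mem_range'_1] at hp hq
                    exact hyinj p (by omega) q (by omega) h)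
                  (List.nodup_range')
            · simp; omega
            · rw [getLast?_cons_ne_nil (by simp), getLast?_cons_ne_nil
                (by simp [range'_ne_nil (by omega : 0 < k - 1)]),
                List.getLast?_map, range'_getLast? (by omega)]
              exact congrArg some (congrArg y (by omega))
          rcases hqt _ _ hpath with hA | hA
          · by_cases hk2 : k = 2
            · exfalso
              subst hk2
              have : A u v := by
                have h00 : y 0 = v := hy0
                simpa [h00] using hA
              have h1 : ddist A u v ≤ ((1:ℕ):ℕ∞) := by
                exact_mod_cast ddist_le_one_of_arc hloop this
              rw [hd₀] at h1
              exact absurd (by exact_mod_cast h1 : (2:ℕ) ≤ 1) (by omega)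
            · have h1 : ddist A u (y (k-2)) ≤ ((1:ℕ):ℕ∞) :=
                by exact_mod_cast ddist_le_one_of_arc hloop hA
              have := ddist_triangle' h1 (hyiw (k-2) (by omega))
              exact this.trans (by exact_mod_cast by omega)
          · exfalso
            have h1 : ddist A (y (k-2)) u ≤ ((1:ℕ):ℕ∞) :=
              by exact_mod_cast ddist_le_one_of_arc hloop hA
            have := ddist_triangle' (hvyi (k-2) (by omega)) h1
            rw [hn] at this
            have : n ≤ (k-2) + 1 := by exact_mod_cast this
            omega
  -- conclude by maximality
  have hssub : N v ⊂ N u := by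
    refine (Set.ssubset_iff_of_subset hNsub).mpr ⟨u, ?_, hgt'⟩
    show ddist A u u ≤ ((k+1 : ℕ) : ℕ∞)
    rw [ddist_self]
    exact zero_le
  have h1 := Set.ncard_lt_ncard hssub (Set.toFinite _)
  have h2 := hmax u huC
  omega

end Backward

/-- A `k`-quasi-transitive digraph has a `(k+1)`-king iff it has exactly one
initial strong component. -/
theorem kqt_king_iff_unique_initial
    [Fintype V] (A : V → V → Prop) (hloop : ∀ v : V, ¬ A v v)
    (k : ℕ) (hk : 2 ≤ k) (hqt : KQuasiTrans A k) :
    (∃ v : V, IsRKing A (k + 1) v) ↔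
      (∃! C : Set V, IsInitialStrongComponent A C) := by
  constructor
  · rintro ⟨v, hv⟩
    exact king_forward hloop hv
  · intro h
    exact king_backward hloop hk hqt h
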